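/- arXiv:2402.00528 — 11 statements merged into one kernel-verified Lean document; each statement's English description precedes it below -/
import Mathlib

section
/- Let (B, ≺, ◇) be a finitely additive modal contact algebra and define □a := ¬◇¬a. Then the following condition holds: for all x, z ∈ B, if □y ≤ z for every y with y ≺ x, then □x ≤ z — if and only if ◇ is upper continuous, i.e., for each a ∈ B the infimum of the set {◇b : a ≺ b} exists in B and equals ◇a. -/
/-- A contact algebra: a Boolean algebra `B` with a binary relation `prec`
satisfying (S1)-(S6). -/
structure ContactAlgebra (B : Type*) [BooleanAlgebra B] where
  prec : B → B → Prop
  s1_bot : prec ⊥ ⊥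
  s1_top : prec ⊤ ⊤
  s2 : ∀ a b c : B, prec a b → prec a c → prec a (b ⊓ c)
  s3 : ∀ a b c : B, prec a c → prec b c → prec (a ⊔ b) c
  s4 : ∀ a b c d : B, a ≤ b → prec b c → c ≤ d → prec a d
  s5 : ∀ a b : B, prec a b → a ≤ b
  s6 : ∀ a b : B, prec a b → prec bᶜ aᶜ

/-- On a finitely additive modal contact algebra `(B, ≺, ◇)`, with `□a := ¬◇¬a`,
the condition `∀ x z, (∀ y, y ≺ x → □y ≤ z) → □x ≤ z` holds iff `◇` is upper
continuous, i.e. for each `a` the infimum of `{◇b : a ≺ b}` exists and equals `◇a`. -/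
theorem box_lowerCont_iff_diamond_upperCont
    {B : Type*} [BooleanAlgebra B] (C : ContactAlgebra B) (D : B → B)
    (hD0 : D ⊥ = ⊥) (hDadd : ∀ a b : B, D (a ⊔ b) = D a ⊔ D b)
    (hDprox : ∀ a b : B, C.prec a b → C.prec (D a) (D b)) :
    (∀ x z : B, (∀ y : B, C.prec y x → (D yᶜ)ᶜ ≤ z) → (D xᶜ)ᶜ ≤ z) ↔
    (∀ a : B, IsGLB {d : B | ∃ b : B, C.prec a b ∧ d = D b} (D a)) := by
  constructor
  · intro L a
    constructor
    · rintro d ⟨b, hab, rfl⟩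
      exact C.s5 _ _ (hDprox _ _ hab)
    · intro w hw
      rw [← compl_le_compl_iff_le]
      have := L aᶜ wᶜ (fun y hy => by
        have hab : C.prec a yᶜ := by
          have := C.s6 _ _ hy
          rwa [compl_compl] at this
        have : w ≤ D yᶜ := hw ⟨yᶜ, hab, rfl⟩
        exact compl_le_compl this)
      rwa [compl_compl] at this
  · intro G x z h
    rw [← compl_le_compl_iff_le, compl_compl]
    refine (G xᶜ).2 ?_
    rintro d ⟨b, hab, rfl⟩
    rw [← compl_le_compl_iff_le, compl_compl]
    have hy : C.prec bᶜ x := by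
      have := C.s6 _ _ hab
      rwa [compl_compl] at this
    have := h bᶜ hy
    rwa [compl_compl] at this
end

section
/- Let (B, ≺, ◇) be an upper continuous modal compingent algebra, let C be a complete Boolean algebra, and let e : B → C be an injective Boolean algebra homomorphism whose image is both join-dense and meet-dense in C (so that C is the MacNeille completion of B). Define on C: α ≺' β iff there exist a, b ∈ B with a ≺ b, α ≤ e(a), and e(b) ≤ β; and ◇'α := inf{ e(◇a) : a ∈ B, α ≤ e(a) }. Then (C, ≺', ◇') is an upper continuous modal de Vries algebra (i.e., (C, ≺') is a de Vries algebra, ◇' is de Vries additive, and ◇' is upper continuous), and moreover for all a, b ∈ B: a ≺ b if and only if e(a) ≺' e(b), and ◇'(e(a)) = e(◇a). -/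
/-- A compingent algebra: a contact algebra satisfying (S7) and (S8). -/
structure CompingentAlgebra (B : Type*) [BooleanAlgebra B] extends ContactAlgebra B where
  s7 : ∀ a b : B, prec a b → ∃ c : B, prec a c ∧ prec c b
  s8 : ∀ a : B, a ≠ ⊥ → ∃ b : B, b ≠ ⊥ ∧ prec b a

/-- The proximity on the MacNeille completion:
`α ≺' β` iff there are `a ≺ b` in `B` with `α ≤ e a` and `e b ≤ β`. -/
def MacNeillePrec {B C : Type*} [BooleanAlgebra B] [CompleteBooleanAlgebra C]
    (prec : B → B → Prop) (e : B → C) (α β : C) : Prop :=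
  ∃ a b : B, prec a b ∧ α ≤ e a ∧ e b ≤ β

/-- The modal operator on the MacNeille completion:
`◇'α := inf { e (◇a) : a ∈ B, α ≤ e a }`. -/
noncomputable def MacNeilleDia {B C : Type*} [BooleanAlgebra B] [CompleteBooleanAlgebra C]
    (dia : B → B) (e : B → C) (α : C) : C :=
  sInf {x : C | ∃ a : B, α ≤ e a ∧ x = e (dia a)}

/-- The MacNeille completion of an upper continuous modal compingent algebra is an
upper continuous modal de Vries algebra, and the embedding preserves and reflects `≺`
and commutes with `◇`. -/
theorem macNeille_of_upperContinuous_modal_compingent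
    {B C : Type*} [BooleanAlgebra B] [CompleteBooleanAlgebra C]
    (A : CompingentAlgebra B) (dia : B → B)
    -- `dia` is de Vries additive:
    (hdia0 : dia ⊥ = ⊥)
    (hdiaAdd : ∀ a₁ b₁ a₂ b₂ : B, A.prec a₁ b₁ → A.prec a₂ b₂ →
        A.prec (dia (a₁ ⊔ a₂)) (dia b₁ ⊔ dia b₂))
    -- `dia` is upper continuous:
    (hdiaUC : ∀ a : B, IsGLB {d : B | ∃ b : B, A.prec a b ∧ d = dia b} (dia a))
    -- `e : B → C` is an injective Boolean algebra homomorphism: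
    (e : B → C) (heInj : Function.Injective e)
    (heBot : e ⊥ = ⊥) (heTop : e ⊤ = ⊤)
    (heInf : ∀ a b : B, e (a ⊓ b) = e a ⊓ e b)
    (heSup : ∀ a b : B, e (a ⊔ b) = e a ⊔ e b)
    (heCompl : ∀ a : B, e aᶜ = (e a)ᶜ)
    -- the image of `e` is join-dense and meet-dense in `C`:
    (heJoinDense : ∀ γ : C, γ = sSup {x : C | (∃ a : B, x = e a) ∧ x ≤ γ})
    (heMeetDense : ∀ γ : C, γ = sInf {x : C | (∃ a : B, x = e a) ∧ γ ≤ x}) :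
    -- `(C, ≺')` is a contact algebra:
    (MacNeillePrec A.prec e ⊥ ⊥ ∧ MacNeillePrec A.prec e ⊤ ⊤) ∧
    (∀ α β γ : C, MacNeillePrec A.prec e α β → MacNeillePrec A.prec e α γ →
        MacNeillePrec A.prec e α (β ⊓ γ)) ∧
    (∀ α β γ : C, MacNeillePrec A.prec e α γ → MacNeillePrec A.prec e β γ →
        MacNeillePrec A.prec e (α ⊔ β) γ) ∧
    (∀ α β γ δ : C, α ≤ β → MacNeillePrec A.prec e β γ → γ ≤ δ →
        MacNeillePrec A.prec e α δ) ∧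
    (∀ α β : C, MacNeillePrec A.prec e α β → α ≤ β) ∧
    (∀ α β : C, MacNeillePrec A.prec e α β → MacNeillePrec A.prec e βᶜ αᶜ) ∧
    -- `(C, ≺')` is compingent (hence, `C` being complete, a de Vries algebra):
    (∀ α β : C, MacNeillePrec A.prec e α β →
        ∃ γ : C, MacNeillePrec A.prec e α γ ∧ MacNeillePrec A.prec e γ β) ∧
    (∀ α : C, α ≠ ⊥ → ∃ β : C, β ≠ ⊥ ∧ MacNeillePrec A.prec e β α) ∧
    -- `◇'` is de Vries additive:
    (MacNeilleDia dia e ⊥ = ⊥) ∧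
    (∀ α₁ β₁ α₂ β₂ : C, MacNeillePrec A.prec e α₁ β₁ → MacNeillePrec A.prec e α₂ β₂ →
        MacNeillePrec A.prec e (MacNeilleDia dia e (α₁ ⊔ α₂))
          (MacNeilleDia dia e β₁ ⊔ MacNeilleDia dia e β₂)) ∧
    -- `◇'` is upper continuous:
    (∀ α : C, IsGLB {d : C | ∃ β : C, MacNeillePrec A.prec e α β ∧ d = MacNeilleDia dia e β}
        (MacNeilleDia dia e α)) ∧
    -- the embedding preserves and reflects `≺` and commutes with `◇`:
    (∀ a b : B, A.prec a b ↔ MacNeillePrec A.prec e (e a) (e b)) ∧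
    (∀ a : B, MacNeilleDia dia e (e a) = e (dia a)) := by
  -- `e` is an order embedding
  have ele : ∀ {a b : B}, e a ≤ e b ↔ a ≤ b := by
    intro a b
    constructor
    · intro h
      have h1 : e (a ⊓ b) = e a := by rw [heInf]; exact inf_eq_left.mpr h
      have := heInj h1
      exact inf_eq_left.mp this
    · intro h
      have h1 : e (a ⊓ b) = e a := by rw [inf_eq_left.mpr h]
      calc e a = e (a ⊓ b) := h1.symm
        _ ≤ e b := by rw [heInf]; exact inf_le_right
  have emono : ∀ {a b : B}, a ≤ b → e a ≤ e b := fun h => ele.mpr h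
  -- `dia` is monotone
  have diamono : ∀ {a b : B}, a ≤ b → dia a ≤ dia b := by
    intro a b h
    refine (hdiaUC b).2 ?_
    rintro d ⟨c, hc, rfl⟩
    exact (hdiaUC a).1 ⟨c, A.s4 a b c c h hc le_rfl, rfl⟩
  -- `e` preserves existing infima (from join-density)
  have hglb : ∀ (S : Set B) (b : B), IsGLB S b → ∀ γ : C, (∀ s ∈ S, γ ≤ e s) → γ ≤ e b := by
    intro S b hb γ hγ
    rw [heJoinDense γ]
    apply sSup_le
    rintro x ⟨⟨a, rfl⟩, hx⟩
    apply emono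
    apply hb.2
    intro s hs
    exact ele.mp (hx.trans (hγ s hs))
  -- diamond commutes with e
  have dia'e : ∀ a : B, MacNeilleDia dia e (e a) = e (dia a) := by
    intro a
    refine le_antisymm (sInf_le ⟨a, le_rfl, rfl⟩) (le_sInf ?_)
    rintro x ⟨c, hc, rfl⟩
    exact emono (diamono (ele.mp hc))
  -- monotonicity of MacNeilleDia
  have dmono : ∀ {α β : C}, α ≤ β → MacNeilleDia dia e α ≤ MacNeilleDia dia e β := by
    intro α β h
    apply le_sInf
    rintro x ⟨c, hc, rfl⟩
    exact sInf_le ⟨c, h.trans hc, rfl⟩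
  -- S5'
  have s5' : ∀ α β : C, MacNeillePrec A.prec e α β → α ≤ β := by
    rintro α β ⟨a, b, hab, ha, hb⟩
    exact ha.trans ((emono (A.s5 a b hab)).trans hb)
  refine ⟨⟨⟨⊥, ⊥, A.s1_bot, heBot ▸ le_rfl, heBot ▸ le_rfl⟩,
          ⟨⊤, ⊤, A.s1_top, heTop ▸ le_rfl, heTop ▸ le_rfl⟩⟩,
    ?_, ?_, ?_, s5', ?_, ?_, ?_, ?_, ?_, ?_, ?_, dia'e⟩
  · -- S2
    rintro α β γ ⟨a₁, b₁, h₁, ha₁, hb₁⟩ ⟨a₂, b₂, h₂, ha₂, hb₂⟩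
    refine ⟨a₁ ⊓ a₂, b₁ ⊓ b₂, ?_, ?_, ?_⟩
    · exact A.s2 _ _ _ (A.s4 _ a₁ _ _ inf_le_left h₁ le_rfl)
        (A.s4 _ a₂ _ _ inf_le_right h₂ le_rfl)
    · rw [heInf]; exact le_inf ha₁ ha₂
    · rw [heInf]; exact inf_le_inf hb₁ hb₂
  · -- S3
    rintro α β γ ⟨a₁, b₁, h₁, ha₁, hb₁⟩ ⟨a₂, b₂, h₂, ha₂, hb₂⟩
    refine ⟨a₁ ⊔ a₂, b₁ ⊔ b₂, ?_, ?_, ?_⟩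
    · exact A.s3 _ _ _ (A.s4 a₁ a₁ b₁ _ le_rfl h₁ le_sup_left)
        (A.s4 a₂ a₂ b₂ _ le_rfl h₂ le_sup_right)
    · rw [heSup]; exact sup_le_sup ha₁ ha₂
    · rw [heSup]; exact sup_le hb₁ hb₂
  · -- S4
    rintro α β γ δ hαβ ⟨a, b, hab, ha, hb⟩ hγδ
    exact ⟨a, b, hab, hαβ.trans ha, hb.trans hγδ⟩
  · -- S6
    rintro α β ⟨a, b, hab, ha, hb⟩
    refine ⟨bᶜ, aᶜ, A.s6 a b hab, ?_, ?_⟩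
    · rw [heCompl]; exact compl_le_compl hb
    · rw [heCompl]; exact compl_le_compl ha
  · -- S7
    rintro α β ⟨a, b, hab, ha, hb⟩
    obtain ⟨c, hac, hcb⟩ := A.s7 a b hab
    exact ⟨e c, ⟨a, c, hac, ha, le_rfl⟩, ⟨c, b, hcb, le_rfl, hb⟩⟩
  · -- S8
    intro α hα
    have : ∃ a : B, e a ≤ α ∧ a ≠ ⊥ := by
      by_contra h
      push_neg at h
      apply hα
      apply le_antisymm _ bot_le
      rw [heJoinDense α]
      apply sSup_le
      rintro x ⟨⟨a, rfl⟩, hx⟩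
      rw [h a hx, heBot]
    obtain ⟨a, haα, ha⟩ := this
    obtain ⟨b, hb, hba⟩ := A.s8 a ha
    refine ⟨e b, ?_, b, a, hba, le_rfl, haα⟩
    intro h
    exact hb (heInj (h.trans heBot.symm))
  · -- dia' ⊥ = ⊥
    apply le_antisymm _ bot_le
    have : e (dia ⊥) ∈ {x : C | ∃ a : B, (⊥ : C) ≤ e a ∧ x = e (dia a)} := ⟨⊥, bot_le, rfl⟩
    calc MacNeilleDia dia e ⊥ ≤ e (dia ⊥) := sInf_le this
      _ = ⊥ := by rw [hdia0, heBot]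
  · -- additivity
    rintro α₁ β₁ α₂ β₂ ⟨a₁, b₁, h₁, ha₁, hb₁⟩ ⟨a₂, b₂, h₂, ha₂, hb₂⟩
    refine ⟨dia (a₁ ⊔ a₂), dia b₁ ⊔ dia b₂, hdiaAdd a₁ b₁ a₂ b₂ h₁ h₂, ?_, ?_⟩
    · apply sInf_le
      refine ⟨a₁ ⊔ a₂, ?_, rfl⟩
      rw [heSup]
      exact sup_le_sup ha₁ ha₂
    · rw [heSup]
      apply sup_le_sup
      · apply le_sInf
        rintro x ⟨c, hc, rfl⟩
        exact emono (diamono (ele.mp (hb₁.trans hc)))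
      · apply le_sInf
        rintro x ⟨c, hc, rfl⟩
        exact emono (diamono (ele.mp (hb₂.trans hc)))
  · -- upper continuity
    intro α
    constructor
    · rintro d ⟨β, hβ, rfl⟩
      exact dmono (s5' α β hβ)
    · intro γ hγ
      apply le_sInf
      rintro x ⟨c, hc, rfl⟩
      apply hglb _ _ (hdiaUC c)
      rintro s ⟨d, hd, rfl⟩
      have : γ ≤ MacNeilleDia dia e (e d) :=
        hγ ⟨e d, ⟨c, d, hd, hc, le_rfl⟩, rfl⟩
      rwa [dia'e d] at this
  · -- preserves and reflects prec
    intro a b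
    constructor
    · intro h; exact ⟨a, b, h, le_rfl, le_rfl⟩
    · rintro ⟨a', b', h, ha, hb⟩
      exact A.s4 a a' b' b (ele.mp ha) h (ele.mp hb)
end

section
/- Let (B, ≺) be a compingent algebra satisfying (S9): a ≺ b implies there is c with c ≺ c and a ≺ c ≺ b. Let C be a complete Boolean algebra and e : B → C an injective Boolean algebra homomorphism whose image is both join-dense and meet-dense in C (so that C is the MacNeille completion of B). Define on C: α ≺' β iff there exist a, b ∈ B with a ≺ b, α ≤ e(a), and e(b) ≤ β. Then (C, ≺') is a de Vries algebra satisfying (S9): α ≺' β implies there is γ ∈ C with γ ≺' γ and α ≺' γ ≺' β. -/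
/-- The MacNeille completion of a compingent algebra satisfying (S9) is a de Vries
algebra satisfying (S9) (i.e., it is zerodimensional). -/
theorem macNeille_zerodimensional
    {B C : Type*} [BooleanAlgebra B] [CompleteBooleanAlgebra C]
    (A : CompingentAlgebra B)
    -- `(B, ≺)` satisfies (S9):
    (hS9 : ∀ a b : B, A.prec a b → ∃ c : B, A.prec c c ∧ A.prec a c ∧ A.prec c b)
    -- `e : B → C` is an injective Boolean algebra homomorphism:
    (e : B → C) (heInj : Function.Injective e)
    (heBot : e ⊥ = ⊥) (heTop : e ⊤ = ⊤)
    (heInf : ∀ a b : B, e (a ⊓ b) = e a ⊓ e b)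
    (heSup : ∀ a b : B, e (a ⊔ b) = e a ⊔ e b)
    (heCompl : ∀ a : B, e aᶜ = (e a)ᶜ)
    -- the image of `e` is join-dense and meet-dense in `C`:
    (heJoinDense : ∀ γ : C, γ = sSup {x : C | (∃ a : B, x = e a) ∧ x ≤ γ})
    (heMeetDense : ∀ γ : C, γ = sInf {x : C | (∃ a : B, x = e a) ∧ γ ≤ x}) :
    -- `(C, ≺')` is a contact algebra:
    (MacNeillePrec A.prec e ⊥ ⊥ ∧ MacNeillePrec A.prec e ⊤ ⊤) ∧
    (∀ α β γ : C, MacNeillePrec A.prec e α β → MacNeillePrec A.prec e α γ →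
        MacNeillePrec A.prec e α (β ⊓ γ)) ∧
    (∀ α β γ : C, MacNeillePrec A.prec e α γ → MacNeillePrec A.prec e β γ →
        MacNeillePrec A.prec e (α ⊔ β) γ) ∧
    (∀ α β γ δ : C, α ≤ β → MacNeillePrec A.prec e β γ → γ ≤ δ →
        MacNeillePrec A.prec e α δ) ∧
    (∀ α β : C, MacNeillePrec A.prec e α β → α ≤ β) ∧
    (∀ α β : C, MacNeillePrec A.prec e α β → MacNeillePrec A.prec e βᶜ αᶜ) ∧
    -- `(C, ≺')` is compingent (hence, `C` being complete, a de Vries algebra):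
    (∀ α β : C, MacNeillePrec A.prec e α β →
        ∃ γ : C, MacNeillePrec A.prec e α γ ∧ MacNeillePrec A.prec e γ β) ∧
    (∀ α : C, α ≠ ⊥ → ∃ β : C, β ≠ ⊥ ∧ MacNeillePrec A.prec e β α) ∧
    -- `(C, ≺')` satisfies (S9):
    (∀ α β : C, MacNeillePrec A.prec e α β →
        ∃ γ : C, MacNeillePrec A.prec e γ γ ∧
          MacNeillePrec A.prec e α γ ∧ MacNeillePrec A.prec e γ β) := by
  have heMono : ∀ a b : B, a ≤ b → e a ≤ e b := by
    intro a b hab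
    have : e a ⊔ e b = e b := by rw [← heSup, sup_eq_right.mpr hab]
    exact le_of_sup_eq this
  refine ⟨⟨⟨⊥, ⊥, A.s1_bot, by simp [heBot]⟩, ⟨⊤, ⊤, A.s1_top, by simp [heTop]⟩⟩,
    ?_, ?_, ?_, ?_, ?_, ?_, ?_, ?_⟩
  · rintro α β γ ⟨a, b, hab, hα, hβ⟩ ⟨a', b', hab', hα', hγ⟩
    refine ⟨a ⊓ a', b ⊓ b', ?_, ?_, ?_⟩
    · exact A.s2 _ _ _ (A.s4 _ _ _ _ inf_le_left hab le_rfl)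
        (A.s4 _ _ _ _ inf_le_right hab' le_rfl)
    · rw [heInf]; exact le_inf hα hα'
    · rw [heInf]; exact inf_le_inf hβ hγ
  · rintro α β γ ⟨a, b, hab, hα, hγ⟩ ⟨a', b', hab', hβ, hγ'⟩
    refine ⟨a ⊔ a', b ⊔ b', ?_, ?_, ?_⟩
    · exact A.s3 _ _ _ (A.s4 _ _ _ _ le_rfl hab le_sup_left)
        (A.s4 _ _ _ _ le_rfl hab' le_sup_right)
    · rw [heSup]; exact sup_le_sup hα hβ
    · rw [heSup]; exact sup_le hγ hγ'
  · rintro α β γ δ hαβ ⟨a, b, hab, hβ, hγ⟩ hγδ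
    exact ⟨a, b, hab, hαβ.trans hβ, hγ.trans hγδ⟩
  · rintro α β ⟨a, b, hab, hα, hβ⟩
    exact hα.trans ((heMono _ _ (A.s5 _ _ hab)).trans hβ)
  · rintro α β ⟨a, b, hab, hα, hβ⟩
    refine ⟨bᶜ, aᶜ, A.s6 _ _ hab, ?_, ?_⟩
    · rw [heCompl]; exact compl_le_compl hβ
    · rw [heCompl]; exact compl_le_compl hα
  · rintro α β ⟨a, b, hab, hα, hβ⟩
    obtain ⟨c, hac, hcb⟩ := A.s7 _ _ hab
    exact ⟨e c, ⟨a, c, hac, hα, le_rfl⟩, ⟨c, b, hcb, le_rfl, hβ⟩⟩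
  · intro α hα
    have : ∃ a : B, e a ≤ α ∧ e a ≠ ⊥ := by
      by_contra h
      push_neg at h
      apply hα
      rw [heJoinDense α]
      apply le_antisymm _ bot_le
      apply sSup_le
      rintro x ⟨⟨a, rfl⟩, hx⟩
      rw [h a hx]
    obtain ⟨a, haα, ha⟩ := this
    have ha' : a ≠ ⊥ := fun h => ha (by rw [h, heBot])
    obtain ⟨b, hb, hba⟩ := A.s8 _ ha'
    refine ⟨e b, fun h => hb (heInj (by rw [h, heBot])), b, a, hba, le_rfl, haα⟩
  · rintro α β ⟨a, b, hab, hα, hβ⟩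
    obtain ⟨c, hcc, hac, hcb⟩ := hS9 _ _ hab
    exact ⟨e c, ⟨c, c, hcc, le_rfl, le_rfl⟩, ⟨a, c, hac, hα, le_rfl⟩,
      ⟨c, b, hcb, le_rfl, hβ⟩⟩
end

section
/- Let X be a set, E a binary relation and T a ternary relation on X, and x ∈ X. Then the following are equivalent: (i) for every subset P ⊆ X, [for all y, x E y implies y ∈ P] holds if and only if [for all y, z, T x y z implies z ∈ P]; (ii) for every z ∈ X, x E z if and only if there exists y with T x y z. (This is the local first-order correspondence of the axiom (A0): [∀]p ↔ ∇(⊥, p).) -/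
/-- Local first-order correspondence of the axiom (A0): `[∀]p ↔ ∇(⊥, p)`.
At a point `x`, the modal equivalence holds under all valuations iff
`∀ z, x E z ↔ ∃ y, T x y z`. -/
theorem correspondence_A0 {X : Type*} (E : X → X → Prop) (T : X → X → X → Prop) (x : X) :
    (∀ P : Set X, ((∀ y : X, E x y → y ∈ P) ↔ (∀ y z : X, T x y z → z ∈ P))) ↔
    (∀ z : X, E x z ↔ ∃ y : X, T x y z) := by
  constructor
  · intro h z
    constructor
    · intro hEz
      exact (h {w | ∃ y, T x y w}).mpr (fun y z' hT => ⟨y, hT⟩) z hEz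
    · rintro ⟨y, hT⟩
      exact (h {w | E x w}).mp (fun _ hw => hw) y z hT
  · intro h P
    constructor
    · intro hP y z hT
      exact hP z ((h z).mpr ⟨y, hT⟩)
    · intro hP y hE
      obtain ⟨w, hT⟩ := (h y).mp hE
      exact hP w y hT
end

section
/- Let X be a set, T a ternary relation on X, and x ∈ X. Then the following are equivalent: (i) for all subsets P, Q ⊆ X, if [for all y, z, T x y z implies y ∈ P or z ∈ Q], then x ∈ P or x ∈ Q; (ii) T x x x. (This is the local first-order correspondence of the axiom (A4): ∇(p, q) → (p ∨ q).) -/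
/-- Local first-order correspondence of the axiom (A4): `∇(p, q) → (p ∨ q)`.
At a point `x`, the modal formula holds under all valuations iff `T x x x`. -/
theorem correspondence_A4 {X : Type*} (T : X → X → X → Prop) (x : X) :
    (∀ P Q : Set X, (∀ y z : X, T x y z → y ∈ P ∨ z ∈ Q) → x ∈ P ∨ x ∈ Q) ↔
    T x x x := by
  constructor
  · intro h
    by_contra hT
    rcases h {y | y ≠ x} {z | z ≠ x} (fun y z hyz => by
      by_contra hc
      push_neg at hc
      obtain ⟨hy, hz⟩ := hc
      simp only [Set.mem_setOf_eq, not_not] at hy hz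
      subst hy; subst hz; exact hT hyz) with h' | h' <;> exact h' rfl
  · intro hT P Q h
    exact h x x hT
end

section
/- Let X be a set, E a binary relation and T a ternary relation on X, and x ∈ X. Then the following are equivalent: (i) for all subsets P, Q ⊆ X, if [for all y, z, T x y z implies y ∈ P or z ∈ Q], then for every w with x E w and all y, z, T w y z implies y ∈ P or z ∈ Q; (ii) for all y, z, w ∈ X, if x E w and T w y z, then T x y z. (This is the local first-order correspondence of the left-to-right implication of the axiom (A10): ∇(p, q) → [∀]∇(p, q).) -/
/-- Local first-order correspondence of the left-to-right implication of the axiom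
(A10): `∇(p, q) → [∀]∇(p, q)`. At a point `x`, the modal formula holds under all
valuations iff `∀ y z w, x E w → T w y z → T x y z`. -/
theorem correspondence_A10 {X : Type*} (E : X → X → Prop) (T : X → X → X → Prop) (x : X) :
    (∀ P Q : Set X, (∀ y z : X, T x y z → y ∈ P ∨ z ∈ Q) →
      (∀ w : X, E x w → ∀ y z : X, T w y z → y ∈ P ∨ z ∈ Q)) ↔
    (∀ y z w : X, E x w → T w y z → T x y z) := by
  constructor
  · intro h y z w hxw hT
    by_contra hnot
    have := h {y' | y' ≠ y} {z' | z' ≠ z}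
      (fun y' z' hT' => by
        by_contra hc
        push_neg at hc
        obtain ⟨h1, h2⟩ := hc
        simp only [Set.mem_setOf_eq, not_not] at h1 h2
        exact hnot (h1 ▸ h2 ▸ hT')) w hxw y z hT
    simp at this
  · intro h P Q hPQ w hxw y z hT
    exact hPQ y z (h y z w hxw hT)
end

section
/- Let X be a set, T a ternary relation and S a binary relation on X, and x ∈ X. Then the following are equivalent: (i) for all subsets P, Q ⊆ X, if [for all y, z, T x y z implies y ∈ P or z ∈ Q], then for all y, z with T x y z, either there exists u with y S u and u ∈ P, or for all w, z S w implies w ∈ Q; (ii) for all y, z, w ∈ X, if T x y z and z S w, then there exists u with T x u w and y S u. (This is the local first-order correspondence of the axiom (Add): ∇(p, q) → ∇(◇p, □q).) -/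
/-- Local first-order correspondence of the axiom (Add): `∇(p, q) → ∇(◇p, □q)`.
At a point `x`, the modal formula holds under all valuations iff
`∀ y z w, T x y z → z S w → ∃ u, T x u w ∧ y S u`. -/
theorem correspondence_Add {X : Type*} (T : X → X → X → Prop) (S : X → X → Prop) (x : X) :
    (∀ P Q : Set X, (∀ y z : X, T x y z → y ∈ P ∨ z ∈ Q) →
      (∀ y z : X, T x y z →
        (∃ u : X, S y u ∧ u ∈ P) ∨ (∀ w : X, S z w → w ∈ Q))) ↔
    (∀ y z w : X, T x y z → S z w → ∃ u : X, T x u w ∧ S y u) := by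
  constructor
  · intro h y z w hT hS
    have := h {u | ¬ S y u} {w' | ∃ u, S y u ∧ T x u w'}
      (by
        intro y' z' hT'
        by_cases hy : S y y'
        · exact Or.inr ⟨y', hy, hT'⟩
        · exact Or.inl hy) y z hT
    rcases this with ⟨u, hu, hnu⟩ | hall
    · exact absurd hu hnu
    · obtain ⟨u, hu1, hu2⟩ := hall w hS
      exact ⟨u, hu2, hu1⟩
  · intro h P Q hPQ y z hT
    by_cases hex : ∃ u, S y u ∧ u ∈ P
    · exact Or.inl hex
    · refine Or.inr fun w hS => ?_
      obtain ⟨u, hu1, hu2⟩ := h y z w hT hS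
      rcases hPQ u w hu1 with hP | hQ
      · exact absurd ⟨u, hu2, hP⟩ hex
      · exact hQ
end

section
/- Let (X, T, S) be a simple MS²IC-frame and define a binary relation R_T on X by x R_T y iff T x x y. Then (X, R_T, S) is a modal contact frame (R_T is reflexive and symmetric, and x R_T y together with x S z imply that there is w with z R_T w and y S w), and moreover for all x, y, z ∈ X: T x y z if and only if y R_T z (i.e., T = T_{R_T}). -/
/-- An MS²IC-frame: a set with a ternary relation `T` and a binary relation `S`
satisfying conditions (1)-(5), where `x E_T y` abbreviates `∃ z, T x y z`. -/
structure IsMS2ICFrame {X : Type*} (T : X → X → X → Prop) (S : X → X → Prop) : Prop where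
  refl : ∀ x : X, T x x x
  symm : ∀ x y z : X, T x y z → T x z y
  equiv : Equivalence (fun x y : X => ∃ z : X, T x y z)
  shift : ∀ x y z w : X, T x y z → (∃ v : X, T x w v) → T w y z
  comm : ∀ x y z w : X, T x y z → S y w → ∃ u : X, T x w u ∧ S z u

/-- A modal contact frame: a nonempty set with a reflexive symmetric relation `R`
and a relation `S` satisfying the commuting condition. -/
structure IsModalContactFrame {X : Type*} (R S : X → X → Prop) : Prop where
  nonempty : Nonempty X
  refl : ∀ x : X, R x x
  symm : ∀ x y : X, R x y → R y x
  comm : ∀ x y z : X, R x y → S x z → ∃ w : X, R z w ∧ S y w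

/-- If `(X, T, S)` is a simple MS²IC-frame (all points are `E_T`-related), then
`(X, R_T, S)` with `x R_T y ↔ T x x y` is a modal contact frame, and
`T = T_{R_T}`, i.e. `T x y z ↔ T y y z`. -/
theorem simple_MS2IC_to_modalContactFrame {X : Type*}
    (T : X → X → X → Prop) (S : X → X → Prop)
    (hF : IsMS2ICFrame T S) (hne : Nonempty X)
    (hsimple : ∀ x y : X, ∃ z : X, T x y z) :
    IsModalContactFrame (fun x y : X => T x x y) S ∧
    (∀ x y z : X, T x y z ↔ T y y z) := by
  have key : ∀ x y z : X, T x y z ↔ T y y z := fun x y z =>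
    ⟨fun h => hF.shift x y z y h (hsimple x y),
     fun h => hF.shift y y z x h (hsimple y x)⟩
  refine ⟨⟨hne, hF.refl, ?_, ?_⟩, key⟩
  · intro x y h
    exact hF.shift x y x y (hF.symm x x y h) (hsimple x y)
  · intro x y z h hs
    obtain ⟨u, hu, hsu⟩ := hF.comm x x y z h hs
    exact ⟨u, (key x z u).mp hu, hsu⟩
end

section
/- Let (X, R, S) be a modal contact frame and define the ternary relation T_R on X by T_R x y z iff y R z. Then (X, T_R, S) is a simple MS²IC-frame, and for all x, y ∈ X: x R y if and only if T_R x x y (i.e., R = R_{T_R}). -/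
/-- The ternary relation `T_R` associated with a binary relation `R`:
`T_R x y z` iff `y R z`. -/
def ternOf {X : Type*} (R : X → X → Prop) : X → X → X → Prop := fun _ y z => R y z

/-- If `(X, R, S)` is a modal contact frame, then `(X, T_R, S)` is a simple
MS²IC-frame (any two points are `E_{T_R}`-related), and `R = R_{T_R}`, i.e.
`x R y ↔ T_R x x y`. -/
theorem modalContactFrame_to_simple_MS2IC {X : Type*}
    (R S : X → X → Prop) (h : IsModalContactFrame R S) :
    IsMS2ICFrame (ternOf R) S ∧
    (∀ x y : X, ∃ z : X, ternOf R x y z) ∧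
    (∀ x y : X, R x y ↔ ternOf R x x y) := by
  refine ⟨⟨fun x => h.refl x, fun x y z hz => h.symm y z hz,
    ⟨fun x => ⟨x, h.refl x⟩, fun _ => ⟨_, h.refl _⟩, fun _ _ => ⟨_, h.refl _⟩⟩,
    fun x y z w hz _ => hz,
    fun x y z w hz hs => h.comm y z w hz hs⟩,
    fun x y => ⟨y, h.refl y⟩, fun x y => Iff.rfl⟩
end

section
/- Let (X, R, S) be a modal contact frame. Let X' = {(x₁, x₂) ∈ X × X : x₁ R x₂}, define (x₁, x₂) R' (y₁, y₂) iff {x₁, x₂} = {y₁, y₂} (as sets), and (x₁, x₂) S' (y₁, y₂) iff x₁ S y₁ and x₂ S y₂. Then (X', R', S') is a modal contact frame, and the map f : X' → X given by f(x₁, x₂) = x₁ is a regular stable p-morphism from (X', R', S') to (X, R, S). -/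
/-- The carrier of the bisimulation expansion used for (ρ6):
pairs `(x₁, x₂)` with `x₁ R x₂`. -/
def PairFrame {X : Type*} (R : X → X → Prop) : Type _ := {p : X × X // R p.1 p.2}

/-- `(x₁, x₂) R' (y₁, y₂)` iff `{x₁, x₂} = {y₁, y₂}` as sets. -/
def pairR {X : Type*} (R : X → X → Prop) (p q : PairFrame R) : Prop :=
  ({p.1.1, p.1.2} : Set X) = ({q.1.1, q.1.2} : Set X)

/-- `(x₁, x₂) S' (y₁, y₂)` iff `x₁ S y₁` and `x₂ S y₂`. -/
def pairS {X : Type*} {R : X → X → Prop} (S : X → X → Prop) (p q : PairFrame R) : Prop :=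
  S p.1.1 q.1.1 ∧ S p.1.2 q.1.2

/-- The pair construction yields a modal contact frame, and the first projection is
a regular stable p-morphism onto the original frame. -/
theorem pairFrame_modalContact_and_projection {X : Type*}
    (R S : X → X → Prop) (h : IsModalContactFrame R S) :
    IsModalContactFrame (pairR R) (pairS (R := R) S) ∧
    -- `f (x₁, x₂) = x₁` is a regular stable p-morphism:
    ((∀ p q : PairFrame R, pairS (R := R) S p q → S p.1.1 q.1.1) ∧
     (∀ (p : PairFrame R) (y : X), S p.1.1 y →
        ∃ q : PairFrame R, pairS (R := R) S p q ∧ q.1.1 = y) ∧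
     (∀ p q : PairFrame R, pairR R p q → R p.1.1 q.1.1) ∧
     (∀ x y : X, R x y → ∃ p q : PairFrame R, pairR R p q ∧ p.1.1 = x ∧ q.1.1 = y)) := by
  constructor
  · refine ⟨?_, ?_, ?_, ?_⟩
    · obtain ⟨x⟩ := h.nonempty
      exact ⟨⟨(x, x), h.refl x⟩⟩
    · intro p; rfl
    · intro p q hpq; exact hpq.symm
    · rintro p q r hpq ⟨hs1, hs2⟩
      rw [pairR, Set.pair_eq_pair_iff] at hpq
      rcases hpq with ⟨h1, h2⟩ | ⟨h1, h2⟩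
      · exact ⟨r, rfl, h1 ▸ hs1, h2 ▸ hs2⟩
      · refine ⟨⟨(r.1.2, r.1.1), h.symm _ _ r.2⟩, ?_, ?_⟩
        · simp only [pairR]; exact Set.pair_comm _ _
        · exact ⟨h2 ▸ hs2, h1 ▸ hs1⟩
  refine ⟨?_, ?_, ?_, ?_⟩
  · intro p q hpq; exact hpq.1
  · intro p y hy
    obtain ⟨w, hw1, hw2⟩ := h.comm p.1.1 p.1.2 y p.2 hy
    exact ⟨⟨(y, w), hw1⟩, ⟨hy, hw2⟩, rfl⟩
  · intro p q hpq
    rw [pairR, Set.pair_eq_pair_iff] at hpq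
    rcases hpq with ⟨h1, _⟩ | ⟨_, h2⟩
    · rw [← h1]; exact h.refl _
    · rw [← h2]; exact p.2
  · intro x y hxy
    exact ⟨⟨(x, y), hxy⟩, ⟨(y, x), h.symm _ _ hxy⟩, show pairR R _ _ from Set.pair_comm x y, rfl, rfl⟩
end

section
/- Let (X, R, S) be a modal contact frame. Let X' = {1, 2} × X, define (i, x) R' (j, y) iff either i = j = 1 and x = y, or i = j = 2 and x R y; and define (i, x) S' (j, y) iff i = j and x S y. Then (X', R', S') is a modal contact frame, and the map f : X' → X given by f(i, x) = x is a regular stable p-morphism from (X', R', S') to (X, R, S). -/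
/-- The relation `R'` on `{1, 2} × X` (here `Fin 2 × X`, with `0` playing the role
of the first copy and `1` of the second): `(i, x) R' (j, y)` iff either
`i = j = 1` and `x = y`, or `i = j = 2` and `x R y`. -/
def twoCopyR {X : Type*} (R : X → X → Prop) (p q : Fin 2 × X) : Prop :=
  (p.1 = 0 ∧ q.1 = 0 ∧ p.2 = q.2) ∨ (p.1 = 1 ∧ q.1 = 1 ∧ R p.2 q.2)

/-- The relation `S'` on `{1, 2} × X`: `(i, x) S' (j, y)` iff `i = j` and `x S y`. -/
def twoCopyS {X : Type*} (S : X → X → Prop) (p q : Fin 2 × X) : Prop :=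
  p.1 = q.1 ∧ S p.2 q.2

/-- The two-copy construction yields a modal contact frame, and the second
projection `f (i, x) = x` is a regular stable p-morphism onto the original
frame. -/
theorem twoCopy_modalContact_and_projection {X : Type*}
    (R S : X → X → Prop) (h : IsModalContactFrame R S) :
    IsModalContactFrame (twoCopyR R) (twoCopyS S) ∧
    -- `f (i, x) = x` is a regular stable p-morphism:
    ((∀ p q : Fin 2 × X, twoCopyS S p q → S p.2 q.2) ∧
     (∀ (p : Fin 2 × X) (y : X), S p.2 y →
        ∃ q : Fin 2 × X, twoCopyS S p q ∧ q.2 = y) ∧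
     (∀ p q : Fin 2 × X, twoCopyR R p q → R p.2 q.2) ∧
     (∀ x y : X, R x y → ∃ p q : Fin 2 × X, twoCopyR R p q ∧ p.2 = x ∧ q.2 = y)) := by
  obtain ⟨⟨x0⟩, hrefl, hsymm, hcomm⟩ := h
  refine ⟨⟨⟨(0, x0)⟩, ?_, ?_, ?_⟩, ?_, ?_, ?_, ?_⟩
  · intro p
    rcases Fin.exists_fin_two.mp ⟨p.1, rfl⟩ with h1 | h1
    · exact Or.inl ⟨h1, h1, rfl⟩
    · exact Or.inr ⟨h1, h1, hrefl p.2⟩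
  · rintro p q (⟨h1, h2, h3⟩ | ⟨h1, h2, h3⟩)
    · exact Or.inl ⟨h2, h1, h3.symm⟩
    · exact Or.inr ⟨h2, h1, hsymm _ _ h3⟩
  · rintro p q r hpq ⟨h1, h2⟩
    rcases hpq with ⟨ha, hb, hc⟩ | ⟨ha, hb, hc⟩
    · exact ⟨(r.1, r.2), Or.inl ⟨(h1.symm.trans ha), (h1.symm.trans ha), rfl⟩,
        ⟨hb.trans (ha.symm.trans h1), hc ▸ h2⟩⟩
    · obtain ⟨w, hw1, hw2⟩ := hcomm p.2 q.2 r.2 hc h2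
      exact ⟨(r.1, w), Or.inr ⟨(h1.symm.trans ha), (h1.symm.trans ha), hw1⟩, ⟨hb.trans (ha.symm.trans h1), hw2⟩⟩
  · rintro p q ⟨-, h2⟩; exact h2
  · intro p y hy; exact ⟨(p.1, y), ⟨rfl, hy⟩, rfl⟩
  · rintro p q (⟨-, -, h3⟩ | ⟨-, -, h3⟩)
    · exact h3 ▸ hrefl p.2
    · exact h3
  · intro x y hxy
    exact ⟨(1, x), (1, y), Or.inr ⟨rfl, rfl, hxy⟩, rfl, rfl⟩
end
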